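/- Let n ≥ 2 and let x₁, …, xₙ be real numbers whose maximum m is attained by exactly one index. Then lim_{u → m⁺} [ 1 − (1/n) Σ_{i=1}^n W((xᵢ − m)/(u − m)) ] = 1 − 1/(2n). (The expression in brackets is the boundary-kernel distribution estimator F̂_u^{[BK,u]} with right support endpoint u, evaluated at the sample maximum X₍ₙ₎ = m.) -/

import Mathlib

open MeasureTheory Filter Topology

/-- Limit of the boundary-kernel distribution estimator at the sample maximum
as the hypothesized right endpoint `u` decreases to the maximum `m`:
if the maximum is attained by exactly one index, `W(t) → 0` as `t → −∞`, and
`W(0) = 1/2`, then `F̂_u^{[BK,u]}(m) = 1 − (1/n) Σᵢ W((xᵢ − m)/(u − m))`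
tends to `1 − 1/(2n)` as `u → m⁺`. -/
theorem boundary_kernel_limit_at_max
    (W : ℝ → ℝ)
    (hWbot : Tendsto W atBot (nhds 0)) (hW0 : W 0 = 1 / 2)
    (n : ℕ) (hn : 2 ≤ n) (xs : Fin n → ℝ) (m : ℝ)
    (hmax : ∀ i, xs i ≤ m) (hattain : ∃! i, xs i = m) :
    Tendsto (fun u => 1 - (1 / (n : ℝ)) * ∑ i, W ((xs i - m) / (u - m)))
      (nhdsWithin m (Set.Ioi m)) (nhds (1 - 1 / (2 * (n : ℝ)))) := by
  obtain ⟨i₀, hi₀, huniq⟩ := hattain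
  have hnpos : (0 : ℝ) < n := by positivity
  -- each summand tends to ℓ i
  set ℓ : Fin n → ℝ := fun i => if xs i = m then (1:ℝ)/2 else 0 with hℓ
  have hinv : Tendsto (fun u : ℝ => (u - m)⁻¹) (nhdsWithin m (Set.Ioi m)) atTop := by
    have h1 : Tendsto (fun u : ℝ => u - m) (nhdsWithin m (Set.Ioi m))
        (nhdsWithin 0 (Set.Ioi 0)) := by
      apply tendsto_nhdsWithin_of_tendsto_nhds_of_eventually_within
      · have h0 : Tendsto (fun u : ℝ => u - m) (nhds m) (nhds (m - m)) :=
          tendsto_id.sub_const m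
        rw [sub_self] at h0
        exact h0.mono_left nhdsWithin_le_nhds
      · filter_upwards [self_mem_nhdsWithin] with u hu
        simpa using sub_pos.2 (Set.mem_Ioi.1 hu)
    exact tendsto_inv_nhdsGT_zero.comp h1
  have hterm : ∀ i, Tendsto (fun u => W ((xs i - m) / (u - m)))
      (nhdsWithin m (Set.Ioi m)) (nhds (ℓ i)) := by
    intro i
    by_cases h : xs i = m
    · simp only [hℓ, h, if_pos rfl, sub_self, zero_div, ← hW0]
      exact tendsto_const_nhds
    · have hlt : xs i - m < 0 := sub_neg.2 (lt_of_le_of_ne (hmax i) h)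
      have harg : Tendsto (fun u : ℝ => (xs i - m) / (u - m))
          (nhdsWithin m (Set.Ioi m)) atBot := by
        simp only [div_eq_mul_inv]
        exact Tendsto.const_mul_atTop_of_neg hlt hinv
      simpa [hℓ, h, Function.comp_def] using hWbot.comp harg
  have hsum : Tendsto (fun u => ∑ i, W ((xs i - m) / (u - m)))
      (nhdsWithin m (Set.Ioi m)) (nhds (∑ i, ℓ i)) :=
    tendsto_finset_sum _ fun i _ => hterm i
  have hsumℓ : ∑ i, ℓ i = 1 / 2 := by
    have hiff : ∀ i, (xs i = m) ↔ (i = i₀) := fun i =>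
      ⟨fun h => huniq i h, fun h => h ▸ hi₀⟩
    have : ∀ i, ℓ i = if i = i₀ then (1:ℝ)/2 else 0 := fun i => by
      simp [hℓ, hiff i]
    simp only [this]
    simp
  rw [hsumℓ] at hsum
  have hfinal : Tendsto (fun u => 1 - (1 / (n : ℝ)) * ∑ i, W ((xs i - m) / (u - m)))
      (nhdsWithin m (Set.Ioi m)) (nhds (1 - (1 / (n : ℝ)) * (1 / 2))) :=
    tendsto_const_nhds.sub (hsum.const_mul _)
  have heq : 1 - (1 / (n : ℝ)) * (1 / 2) = 1 - 1 / (2 * (n : ℝ)) := by ring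
  rwa [heq] at hfinal
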